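/- Let λ ≠ 0, β > 0, I = diag(A,B,C) positive definite with K_A := (λ²/β²)(C−A) ≠ 1 and K_B := (λ²/β²)(C−B) ≠ 1. Suppose ω, z ∈ ℝ³ satisfy ω = λ z + μ e₃ for some μ ∈ ℝ and −λ e₃ × (I·ω) + e₃ × (λ C ω − β² z) = 0. Then (1 − K_B) z₂ = 0 and (K_A − 1) z₁ = 0, hence z₁ = z₂ = 0 and z = z₃ e₃, ω = (λ z₃ + μ) e₃. -/
import Mathlib


open Matrix

/-- `e₃ = (0,0,1)`. -/
noncomputable def e3 : Fin 3 → ℝ := ![0, 0, 1]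

/-- `I·w = (A w₁, B w₂, C w₃)` for `I = diag(A,B,C)`. -/
noncomputable def Iv (A B C : ℝ) (w : Fin 3 → ℝ) : Fin 3 → ℝ := ![A * w 0, B * w 1, C * w 2]

/-- Core computation of the null-space characterization: if `ω = λz + μe₃` and
`−λ e₃ × (Iω) + e₃ × (λCω − β²z) = 0`, then `(1−K_B)z₂ = 0` and `(K_A−1)z₁ = 0`, so
(for `K_A, K_B ≠ 1`) `z₁ = z₂ = 0`, `z = z₃e₃` and `ω = (λz₃+μ)e₃`. -/
theorem stmt18 (lam β A B C μ : ℝ) (hlam : lam ≠ 0) (hβ : 0 < β)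
    (hA : 0 < A) (hB : 0 < B) (hC : 0 < C)
    (hKA : lam ^ 2 / β ^ 2 * (C - A) ≠ 1) (hKB : lam ^ 2 / β ^ 2 * (C - B) ≠ 1)
    (ω z : Fin 3 → ℝ)
    (hω : ω = lam • z + μ • e3)
    (heq : -lam • crossProduct e3 (Iv A B C ω)
        + crossProduct e3 ((lam * C) • ω - β ^ 2 • z) = 0) :
    (1 - lam ^ 2 / β ^ 2 * (C - B)) * z 1 = 0 ∧
    (lam ^ 2 / β ^ 2 * (C - A) - 1) * z 0 = 0 ∧
    z 0 = 0 ∧ z 1 = 0 ∧ z = z 2 • e3 ∧ ω = (lam * z 2 + μ) • e3 := by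
  subst hω
  have h0 := congrFun heq 0
  have h1 := congrFun heq 1
  simp [cross_apply, e3, Iv, Matrix.vecHead, Matrix.vecTail, Pi.add_apply, Pi.smul_apply,
    Pi.sub_apply, smul_eq_mul] at h0 h1
  have hb : β ^ 2 ≠ 0 := by positivity
  have key1 : (1 - lam ^ 2 / β ^ 2 * (C - B)) * z 1 = 0 := by
    field_simp
    linarith [h0]
  have key0 : (lam ^ 2 / β ^ 2 * (C - A) - 1) * z 0 = 0 := by
    field_simp
    linarith [h1]
  have hz1 : z 1 = 0 := by
    rcases mul_eq_zero.mp key1 with h | h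
    · exact absurd (by linarith : lam ^ 2 / β ^ 2 * (C - B) = 1) hKB
    · exact h
  have hz0 : z 0 = 0 := by
    rcases mul_eq_zero.mp key0 with h | h
    · exact absurd (by linarith : lam ^ 2 / β ^ 2 * (C - A) = 1) hKA
    · exact h
  refine ⟨key1, key0, hz0, hz1, ?_, ?_⟩
  · funext i; fin_cases i <;> simp [e3, hz0, hz1]
  · funext i; fin_cases i <;> simp [e3, hz0, hz1] <;> ring
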